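/- For integers 0 ≤ n ≤ N, variable x and parameter p with 0 < p < 1, the Krawtchouk polynomial K_n(x;p;N) = Σ_{k=0}^n [(-n)_k (-x)_k] / [(-N)_k k! p^k] satisfies the orthogonality relation Σ_{x=0}^N binom(N,x) p^x (1-p)^{N-x} K_m(x;p;N) K_n(x;p;N) = δ_{mn} [(-1)^n n! / (-N)_n] ((1-p)/p)^n. -/

import Mathlib

open scoped BigOperators

open Finset

/-- The Pochhammer symbol `(a)ₖ = a(a+1)⋯(a+k-1)` over `ℝ`. -/
noncomputable def poch (a : ℝ) (k : ℕ) : ℝ := (ascPochhammer ℝ k).eval a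

/-- The Krawtchouk polynomial
`K_n(x; p; N) = Σ_{k=0}^n (-n)ₖ(-x)ₖ / ((-N)ₖ k! pᵏ)`. -/
noncomputable def kraw (n : ℕ) (x p N : ℝ) : ℝ :=
  ∑ k ∈ Finset.range (n + 1),
    poch (-(n : ℝ)) k * poch (-x) k / (poch (-N) k * (Nat.factorial k) * p ^ k)

lemma poch_neg (m : ℕ) : ∀ j : ℕ, poch (-(m:ℝ)) j = (-1)^j * (j.factorial : ℝ) * (m.choose j : ℝ)
  | 0 => by simp [poch]
  | (j+1) => by
    have ih := poch_neg m j
    have hs : poch (-(m:ℝ)) (j+1) = poch (-(m:ℝ)) j * (-(m:ℝ) + j) := by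
      simp [poch, ascPochhammer_succ_right]
    rw [hs, ih]
    rcases le_or_gt m j with h | h
    · rcases eq_or_lt_of_le h with rfl | h'
      · simp [Nat.choose_succ_self]
      · rw [Nat.choose_eq_zero_of_lt h', Nat.choose_eq_zero_of_lt (by omega)]
        simp
    · have hc := congrArg (Nat.cast : ℕ → ℝ) (Nat.choose_succ_right_eq m j)
      push_cast [Nat.cast_sub h.le] at hc
      push_cast [Nat.factorial_succ]
      linear_combination ((-1:ℝ))^j * (j.factorial : ℝ) * hc

lemma choose_mul' {n k s : ℕ} (hsk : s ≤ k) (hsn : s ≤ n) :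
    n.choose k * k.choose s = n.choose s * (n-s).choose (k-s) := by
  rcases le_or_gt k n with h | h
  · exact Nat.choose_mul hsk
  · rw [Nat.choose_eq_zero_of_lt h, Nat.choose_eq_zero_of_lt (by omega : n - s < k - s)]
    ring

lemma kraw_nat (m N x : ℕ) (hm : m ≤ N) (p : ℝ) (hp : p ≠ 0) :
    kraw m (x:ℝ) p (N:ℝ) =
      ∑ j ∈ range (m+1), (-1:ℝ)^j * (m.choose j) * (x.choose j) / ((N.choose j) * p^j) := by
  unfold kraw
  refine Finset.sum_congr rfl fun j hj => ?_
  rw [poch_neg, poch_neg, poch_neg]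
  have hj' : j ≤ N := by have := mem_range.mp hj; omega
  have hN : (N.choose j : ℝ) ≠ 0 := Nat.cast_ne_zero.mpr (Nat.choose_pos hj').ne'
  have hf : (j.factorial : ℝ) ≠ 0 := Nat.cast_ne_zero.mpr j.factorial_ne_zero
  have h1 : ((-1:ℝ))^j ≠ 0 := pow_ne_zero _ (by norm_num)
  field_simp

lemma moment (p q : ℝ) (N s : ℕ) :
    ∑ x ∈ range (N+1), (N.choose x : ℝ) * p^x * q^(N-x) * (x.choose s)
      = (N.choose s : ℝ) * p^s * (p+q)^(N-s) := by
  rcases le_or_gt s N with h | h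
  · rw [range_eq_Ico, ← Finset.sum_Ico_consecutive _ (Nat.zero_le s) (by omega : s ≤ N+1)]
    have h1 : ∑ x ∈ Ico 0 s, (N.choose x : ℝ) * p^x * q^(N-x) * (x.choose s) = 0 := by
      refine sum_eq_zero fun x hx => ?_
      have : x < s := (mem_Ico.mp hx).2
      rw [Nat.choose_eq_zero_of_lt this]
      simp
    rw [h1, zero_add, Finset.sum_Ico_eq_sum_range]
    rw [show N+1-s = (N-s)+1 from by omega, add_pow, Finset.mul_sum]
    refine Finset.sum_congr rfl fun y hy => ?_
    have hy' : y ≤ N - s := by have := mem_range.mp hy; omega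
    have hc := congrArg (Nat.cast : ℕ → ℝ)
      (choose_mul' (n := N) (k := s+y) (s := s) (by omega) h)
    rw [Nat.add_sub_cancel_left] at hc
    push_cast at hc
    rw [show N - (s+y) = (N-s)-y from by omega, pow_add]
    push_cast
    linear_combination (p^s * p^y * q^((N-s)-y)) * hc
  · have h1 : ∀ x ∈ range (N+1), (N.choose x : ℝ) * p^x * q^(N-x) * (x.choose s) = 0 := by
      intro x hx
      rw [Nat.choose_eq_zero_of_lt (by have := mem_range.mp hx; omega : x < s)]
      simp
    rw [sum_eq_zero h1, Nat.choose_eq_zero_of_lt h]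
    simp

lemma chooseP (x j k : ℕ) :
    x.choose j * x.choose k
      = ∑ i ∈ range (k+1), j.choose i * ((j+k-i).choose j * x.choose (j+k-i)) := by
  rcases le_or_gt j x with h | h
  · have hv := Nat.add_choose_eq j (x-j) k
    rw [Nat.add_sub_cancel' h] at hv
    rw [hv, Finset.Nat.sum_antidiagonal_eq_sum_range_succ_mk, Finset.mul_sum]
    refine Finset.sum_congr rfl fun i hi => ?_
    have hik : i ≤ k := by have := mem_range.mp hi; omega
    -- x.choose j * (x-j).choose (k-i) = x.choose (j+(k-i)) * (j+(k-i)).choose j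
    have key : x.choose j * (x-j).choose (k-i) = x.choose (j+(k-i)) * (j+(k-i)).choose j := by
      rcases le_or_gt (j + (k-i)) x with h2 | h2
      · have := Nat.choose_mul (n := x) (k := j + (k-i)) (s := j) (Nat.le_add_right _ _)
        rw [Nat.add_sub_cancel_left] at this
        omega
      · rw [Nat.choose_eq_zero_of_lt h2, Nat.choose_eq_zero_of_lt (by omega : x - j < k - i)]
        ring
    rw [show j+k-i = j+(k-i) from by omega]
    calc x.choose j * (j.choose i * (x-j).choose (k-i))
        = j.choose i * (x.choose j * (x-j).choose (k-i)) := by ring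
      _ = j.choose i * ((j+(k-i)).choose j * x.choose (j+(k-i))) := by rw [key]; ring
  · rw [Nat.choose_eq_zero_of_lt h, Nat.zero_mul]
    refine (Finset.sum_eq_zero fun i hi => ?_).symm
    have hik : i ≤ k := by have := mem_range.mp hi; omega
    rw [Nat.choose_eq_zero_of_lt (by omega : x < j+k-i)]
    ring

lemma lemD : ∀ (M : ℕ) (R d : ℕ), M ≤ R →
    ∑ u ∈ range (M+1), (-1:ℝ)^u * (M.choose u) * ((R-u).choose d)
      = if M ≤ d then (((R-M).choose (d-M) : ℕ) : ℝ) else 0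
  | 0 => by intro R d _; simp
  | (M+1) => by
    intro R d hMR
    have ih1 := lemD M R d (by omega)
    have ih2 := lemD M (R-1) d (by omega)
    have key : ∑ u ∈ range (M+2), (-1:ℝ)^u * ((M+1).choose u) * ((R-u).choose d)
        = (∑ u ∈ range (M+1), (-1:ℝ)^u * (M.choose u) * ((R-u).choose d))
          - ∑ u ∈ range (M+1), (-1:ℝ)^u * (M.choose u) * (((R-1)-u).choose d) := by
      have e1 : ∑ u ∈ range (M+1), (-1:ℝ)^u * (M.choose u) * ((R-u).choose d)
          = ∑ u ∈ range (M+2), (-1:ℝ)^u * (M.choose u) * ((R-u).choose d) := by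
        rw [Finset.sum_range_succ (n := M+1)]
        simp [Nat.choose_succ_self]
      rw [e1, Finset.sum_range_succ' (fun u => (-1:ℝ)^u * ((M+1).choose u) * ((R-u).choose d)),
        Finset.sum_range_succ' (fun u => (-1:ℝ)^u * (M.choose u) * ((R-u).choose d))]
      have e3 : ∑ u ∈ range (M+1), (-1:ℝ)^(u+1) * ((M+1).choose (u+1)) * ((R-(u+1)).choose d)
          = (∑ u ∈ range (M+1), (-1:ℝ)^(u+1) * (M.choose (u+1)) * ((R-(u+1)).choose d))
            - ∑ u ∈ range (M+1), (-1:ℝ)^u * (M.choose u) * (((R-1)-u).choose d) := by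
        rw [← Finset.sum_sub_distrib]
        refine Finset.sum_congr rfl fun u hu => ?_
        rw [Nat.choose_succ_succ, show R-(u+1) = (R-1)-u from by omega]
        push_cast
        ring
      simp only [e3]
      simp [Nat.choose_zero_right]
      ring
    rw [key, ih1, ih2]
    rcases le_or_gt (M+1) d with hd | hd
    · obtain ⟨a, ha⟩ : ∃ a, R - M = a+1 := ⟨R-M-1, by omega⟩
      obtain ⟨b, hb⟩ : ∃ b, d - M = b+1 := ⟨d-M-1, by omega⟩
      rw [if_pos (by omega), if_pos (by omega), if_pos hd, ha, hb,
        show (R-1)-M = a from by omega, show R-(M+1) = a from by omega,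
        show d-(M+1) = b from by omega, Nat.choose_succ_succ]
      push_cast
      ring
    · rcases le_or_gt M d with hd2 | hd2
      · have : d = M := by omega
        subst this
        rw [if_pos le_rfl, if_pos le_rfl, if_neg (by omega)]
        simp
      · rw [if_neg (by omega), if_neg (by omega), if_neg (by omega)]
        ring

lemma lemA (N m k : ℕ) (hm : m ≤ N) (hk : k ≤ N) (p : ℝ) (hp : p ≠ 0) :
    ∑ x ∈ range (N+1),
        (N.choose x : ℝ) * p^x * (1-p)^(N-x) * (x.choose k) * kraw m (x:ℝ) p (N:ℝ)
      = if m ≤ k then (-1:ℝ)^m * (1-p)^m * p^(k-m) * (((N-m).choose (k-m) : ℕ) : ℝ)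
        else 0 := by
  set q : ℝ := 1 - p with hq
  set Δ : ℝ := if m ≤ k then (((N-m).choose (k-m) : ℕ) : ℝ) else 0 with hΔ
  -- Step 1: expand kraw and reduce the x-sum using chooseP and moment
  have step1 : ∑ x ∈ range (N+1),
        (N.choose x : ℝ) * p^x * q^(N-x) * (x.choose k) * kraw m (x:ℝ) p (N:ℝ)
      = ∑ j ∈ range (m+1), ∑ i ∈ range (k+1),
          (-1:ℝ)^j * (m.choose j) * (j.choose i) * (((j+k-i).choose j : ℕ) : ℝ)
            * (N.choose (j+k-i)) * p^(j+k-i) / ((N.choose j) * p^j) := by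
    have e1 : ∑ x ∈ range (N+1),
          (N.choose x : ℝ) * p^x * q^(N-x) * (x.choose k) * kraw m (x:ℝ) p (N:ℝ)
        = ∑ j ∈ range (m+1), ∑ x ∈ range (N+1),
            ((-1:ℝ)^j * (m.choose j) / ((N.choose j) * p^j))
              * ((N.choose x : ℝ) * p^x * q^(N-x) * ((x.choose j) * (x.choose k))) := by
      rw [Finset.sum_comm]
      refine Finset.sum_congr rfl fun x hx => ?_
      rw [kraw_nat m N x hm p hp, Finset.mul_sum]
      refine Finset.sum_congr rfl fun j hj => ?_
      ring
    rw [e1]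
    refine Finset.sum_congr rfl fun j hj => ?_
    have e2 : ∀ x ∈ range (N+1),
        ((-1:ℝ)^j * (m.choose j) / ((N.choose j) * p^j))
          * ((N.choose x : ℝ) * p^x * q^(N-x) * ((x.choose j) * (x.choose k)))
        = ∑ i ∈ range (k+1),
            ((-1:ℝ)^j * (m.choose j) / ((N.choose j) * p^j)) * ((j.choose i) * ((j+k-i).choose j))
              * ((N.choose x : ℝ) * p^x * q^(N-x) * (x.choose (j+k-i))) := by
      intro x hx
      have hc : ((x.choose j * x.choose k : ℕ) : ℝ)
          = ∑ i ∈ range (k+1),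
              ((j.choose i : ℕ) : ℝ) * (((j+k-i).choose j : ℕ) : ℝ) * ((x.choose (j+k-i) : ℕ) : ℝ) := by
        rw [chooseP x j k]
        push_cast
        exact Finset.sum_congr rfl fun i _ => by ring
      push_cast at hc
      calc ((-1:ℝ)^j * (m.choose j) / ((N.choose j) * p^j))
            * ((N.choose x : ℝ) * p^x * q^(N-x) * ((x.choose j) * (x.choose k)))
          = ((-1:ℝ)^j * (m.choose j) / ((N.choose j) * p^j))
            * ((N.choose x : ℝ) * p^x * q^(N-x)) * ((x.choose j : ℝ) * (x.choose k)) := by ring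
        _ = ((-1:ℝ)^j * (m.choose j) / ((N.choose j) * p^j))
            * ((N.choose x : ℝ) * p^x * q^(N-x))
            * (∑ i ∈ range (k+1), ((j.choose i : ℝ)) * ((j+k-i).choose j : ℝ) * (x.choose (j+k-i) : ℝ)) := by
              rw [hc]
        _ = _ := by
              rw [Finset.mul_sum]
              exact Finset.sum_congr rfl fun i _ => by ring
    rw [Finset.sum_congr rfl e2, Finset.sum_comm]
    refine Finset.sum_congr rfl fun i hi => ?_
    rw [← Finset.mul_sum, moment p q N (j+k-i)]
    have : p + q = 1 := by rw [hq]; ring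
    rw [this, one_pow]
    ring
  rw [step1, Finset.sum_comm]
  -- Step 2: evaluate the inner j-sum for each i
  have step2 : ∀ i ∈ range (k+1),
      ∑ j ∈ range (m+1),
          (-1:ℝ)^j * (m.choose j) * (j.choose i) * (((j+k-i).choose j : ℕ) : ℝ)
            * (N.choose (j+k-i)) * p^(j+k-i) / ((N.choose j) * p^j)
        = (-1:ℝ)^i * (m.choose i) * p^(k-i) * Δ := by
    intro i hi
    have hik : i ≤ k := by have := mem_range.mp hi; omega
    rcases le_or_gt i m with him | him
    · rw [range_eq_Ico, ← Finset.sum_Ico_consecutive _ (Nat.zero_le i) (by omega : i ≤ m+1)]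
      have hz : ∑ j ∈ Ico 0 i,
          (-1:ℝ)^j * (m.choose j) * (j.choose i) * (((j+k-i).choose j : ℕ) : ℝ)
            * (N.choose (j+k-i)) * p^(j+k-i) / ((N.choose j) * p^j) = 0 := by
        refine Finset.sum_eq_zero fun j hj => ?_
        rw [Nat.choose_eq_zero_of_lt (by exact (mem_Ico.mp hj).2 : j < i)]
        simp
      rw [hz, zero_add, Finset.sum_Ico_eq_sum_range]
      have e3 : ∀ u ∈ range (m+1-i),
          (-1:ℝ)^(i+u) * (m.choose (i+u)) * ((i+u).choose i) * ((((i+u)+k-i).choose (i+u) : ℕ) : ℝ)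
            * (N.choose ((i+u)+k-i)) * p^((i+u)+k-i) / ((N.choose (i+u)) * p^(i+u))
          = ((-1:ℝ)^i * (m.choose i) * p^(k-i))
            * ((-1:ℝ)^u * ((m-i).choose u) * (((N-i)-u).choose (k-i))) := by
        intro u hu
        have hum : i + u ≤ m := by have := mem_range.mp hu; omega
        have hA := congrArg (Nat.cast : ℕ → ℝ) (Nat.choose_mul (n := m) (Nat.le_add_right i u))
        rw [Nat.add_sub_cancel_left] at hA
        push_cast at hA
        have hB := congrArg (Nat.cast : ℕ → ℝ)
          (choose_mul' (n := N) (k := k+u) (s := i+u) (by omega) (by omega))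
        rw [show (k+u)-(i+u) = k-i from by omega, show N-(i+u) = (N-i)-u from by omega] at hB
        push_cast at hB
        rw [show (i+u)+k-i = k+u from by omega]
        have hNc : ((N.choose (i+u) : ℕ) : ℝ) ≠ 0 :=
          Nat.cast_ne_zero.mpr (Nat.choose_pos (by omega)).ne'
        have hpp : p^(i+u) ≠ 0 := pow_ne_zero _ hp
        rw [show p^(k+u) = p^(k-i) * p^(i+u) from by
          rw [← pow_add]; congr 1; omega]
        rw [div_eq_iff (mul_ne_zero hNc hpp)]
        linear_combination
          ((-1:ℝ)^(i+u) * p^(k-i) * p^(i+u) * (m.choose (i+u) : ℝ) * ((i+u).choose i : ℝ)) * hB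
          + ((-1:ℝ)^(i+u) * p^(k-i) * p^(i+u) * (N.choose (i+u) : ℝ)
              * ((((N-i)-u).choose (k-i) : ℕ) : ℝ)) * hA
      rw [Finset.sum_congr rfl e3, ← Finset.mul_sum]
      rw [show m+1-i = (m-i)+1 from by omega, lemD (m-i) (N-i) (k-i) (by omega)]
      have : (if m-i ≤ k-i then ((((N-i)-(m-i)).choose ((k-i)-(m-i)) : ℕ) : ℝ) else 0) = Δ := by
        rcases le_or_gt m k with h | h
        · rw [if_pos (by omega), hΔ, if_pos h,
            show (N-i)-(m-i) = N-m from by omega, show (k-i)-(m-i) = k-m from by omega]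
        · rw [if_neg (by omega), hΔ, if_neg (by omega)]
      rw [this]
    · have hz : ∑ j ∈ range (m+1),
          (-1:ℝ)^j * (m.choose j) * (j.choose i) * (((j+k-i).choose j : ℕ) : ℝ)
            * (N.choose (j+k-i)) * p^(j+k-i) / ((N.choose j) * p^j) = 0 := by
        refine Finset.sum_eq_zero fun j hj => ?_
        rw [Nat.choose_eq_zero_of_lt (by have := mem_range.mp hj; omega : j < i)]
        simp
      rw [hz, Nat.choose_eq_zero_of_lt him]
      simp
  rw [Finset.sum_congr rfl step2]
  -- Step 3: final alternating binomial sum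
  rcases le_or_gt m k with hmk | hmk
  · rw [if_pos hmk]
    have hΔ' : Δ = (((N-m).choose (k-m) : ℕ) : ℝ) := by rw [hΔ, if_pos hmk]
    rw [hΔ']
    have trunc : ∑ i ∈ range (k+1), (-1:ℝ)^i * (m.choose i) * p^(k-i) * (((N-m).choose (k-m) : ℕ) : ℝ)
        = ∑ i ∈ range (m+1), (-1:ℝ)^i * (m.choose i) * p^(k-i) * (((N-m).choose (k-m) : ℕ) : ℝ) := by
      refine (Finset.sum_subset (by intro x hx; simp at hx ⊢; omega) ?_).symm
      intro i _ hi2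
      rw [Nat.choose_eq_zero_of_lt (by simp at hi2; omega : m < i)]
      simp
    rw [trunc]
    have hb := add_pow (-1 : ℝ) p m
    have e4 : ∀ i ∈ range (m+1),
        (-1:ℝ)^i * (m.choose i) * p^(k-i) * (((N-m).choose (k-m) : ℕ) : ℝ)
        = ((((N-m).choose (k-m) : ℕ) : ℝ) * p^(k-m)) * ((-1:ℝ)^i * p^(m-i) * (m.choose i)) := by
      intro i hi
      rw [show p^(k-i) = p^(k-m) * p^(m-i) from by
        rw [← pow_add]; congr 1; have := mem_range.mp hi; omega]
      ring
    rw [Finset.sum_congr rfl e4, ← Finset.mul_sum, ← hb]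
    rw [show (-1 : ℝ) + p = -(1-p) from by ring, neg_pow]
    ring
  · rw [if_neg (by omega)]
    refine Finset.sum_eq_zero fun i hi => ?_
    rw [hΔ, if_neg (by omega)]
    ring

/-- orthogonality of Krawtchouk polynomials with respect to the
binomial distribution:
`Σ_{x=0}^N C(N,x) pˣ (1-p)^{N-x} K_m K_n = δ_{mn} ((-1)ⁿ n!/(-N)ₙ) ((1-p)/p)ⁿ`. -/
theorem stmt_16 (N m n : ℕ) (hm : m ≤ N) (hn : n ≤ N) (p : ℝ) (hp0 : 0 < p) (hp1 : p < 1) :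
    ∑ x ∈ Finset.range (N + 1),
        (N.choose x : ℝ) * p ^ x * (1 - p) ^ (N - x) *
          kraw m (x : ℝ) p (N : ℝ) * kraw n (x : ℝ) p (N : ℝ) =
      if m = n then
        ((-1 : ℝ) ^ n * (Nat.factorial n : ℝ) / poch (-(N : ℝ)) n) * ((1 - p) / p) ^ n
      else 0 := by
  have hp : p ≠ 0 := hp0.ne'
  have e1 : ∑ x ∈ Finset.range (N + 1),
        (N.choose x : ℝ) * p ^ x * (1 - p) ^ (N - x) *
          kraw m (x : ℝ) p (N : ℝ) * kraw n (x : ℝ) p (N : ℝ)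
      = ∑ k ∈ range (n+1), ((-1:ℝ)^k * (n.choose k) / ((N.choose k) * p^k))
          * ∑ x ∈ range (N+1),
              (N.choose x : ℝ) * p^x * (1-p)^(N-x) * (x.choose k) * kraw m (x:ℝ) p (N:ℝ) := by
    have e0 : ∀ x ∈ range (N+1),
        (N.choose x : ℝ) * p ^ x * (1 - p) ^ (N - x) *
          kraw m (x : ℝ) p (N : ℝ) * kraw n (x : ℝ) p (N : ℝ)
        = ∑ k ∈ range (n+1), ((-1:ℝ)^k * (n.choose k) / ((N.choose k) * p^k))
            * ((N.choose x : ℝ) * p^x * (1-p)^(N-x) * (x.choose k) * kraw m (x:ℝ) p (N:ℝ)) := by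
      intro x hx
      rw [kraw_nat n N x hn p hp, Finset.mul_sum]
      refine Finset.sum_congr rfl fun k hk => ?_
      ring
    rw [Finset.sum_congr rfl e0, Finset.sum_comm]
    exact Finset.sum_congr rfl fun k hk => by rw [Finset.mul_sum]
  rw [e1]
  have e2 : ∀ k ∈ range (n+1),
      ((-1:ℝ)^k * (n.choose k) / ((N.choose k) * p^k))
        * ∑ x ∈ range (N+1),
            (N.choose x : ℝ) * p^x * (1-p)^(N-x) * (x.choose k) * kraw m (x:ℝ) p (N:ℝ)
      = ((-1:ℝ)^k * (n.choose k) / ((N.choose k) * p^k))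
        * (if m ≤ k then (-1:ℝ)^m * (1-p)^m * p^(k-m) * (((N-m).choose (k-m) : ℕ) : ℝ) else 0) := by
    intro k hk
    rw [lemA N m k hm (by have := mem_range.mp hk; omega) p hp]
  rw [Finset.sum_congr rfl e2]
  rcases lt_or_ge n m with hnm | hnm
  · rw [if_neg (by omega)]
    refine Finset.sum_eq_zero fun k hk => ?_
    rw [if_neg (by have := mem_range.mp hk; omega)]
    ring
  · -- m ≤ n
    rw [range_eq_Ico, ← Finset.sum_Ico_consecutive _ (Nat.zero_le m) (by omega : m ≤ n+1)]
    have hz : ∑ k ∈ Ico 0 m, ((-1:ℝ)^k * (n.choose k) / ((N.choose k) * p^k))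
        * (if m ≤ k then (-1:ℝ)^m * (1-p)^m * p^(k-m) * (((N-m).choose (k-m) : ℕ) : ℝ) else 0) = 0 := by
      refine Finset.sum_eq_zero fun k hk => ?_
      rw [if_neg (by have := (mem_Ico.mp hk).2; omega)]
      ring
    rw [hz, zero_add, Finset.sum_Ico_eq_sum_range]
    set Cst : ℝ := (n.factorial : ℝ) * ((N-m).factorial : ℝ)
        / ((N.factorial : ℝ) * ((n-m).factorial : ℝ)) with hCst
    have e3 : ∀ i ∈ range (n+1-m),
        ((-1:ℝ)^(m+i) * (n.choose (m+i)) / ((N.choose (m+i)) * p^(m+i)))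
          * (if m ≤ m+i then (-1:ℝ)^m * (1-p)^m * p^((m+i)-m) * (((N-m).choose ((m+i)-m) : ℕ) : ℝ) else 0)
        = (Cst * ((1-p)^m / p^m)) * ((-1:ℝ)^i * (((n-m).choose i : ℕ) : ℝ)) := by
      intro i hi
      have hin : m + i ≤ n := by have := mem_range.mp hi; omega
      rw [if_pos (Nat.le_add_right m i), Nat.add_sub_cancel_left]
      have hc1 : ((n.choose (m+i) : ℕ) : ℝ)
          = (n.factorial : ℝ) / (((m+i).factorial : ℝ) * ((n-m-i).factorial : ℝ)) := by
        rw [Nat.cast_choose ℝ hin, show n-(m+i) = n-m-i from by omega]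
      have hc2 : (((N-m).choose i : ℕ) : ℝ)
          = ((N-m).factorial : ℝ) / ((i.factorial : ℝ) * ((N-m-i).factorial : ℝ)) := by
        rw [Nat.cast_choose ℝ (by omega : i ≤ N-m), show N-m-i = (N-m)-i from by omega]
      have hc3 : ((N.choose (m+i) : ℕ) : ℝ)
          = (N.factorial : ℝ) / (((m+i).factorial : ℝ) * ((N-m-i).factorial : ℝ)) := by
        rw [Nat.cast_choose ℝ (by omega : m+i ≤ N), show N-(m+i) = N-m-i from by omega]
      have hc4 : (((n-m).choose i : ℕ) : ℝ)
          = ((n-m).factorial : ℝ) / ((i.factorial : ℝ) * ((n-m-i).factorial : ℝ)) := by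
        rw [Nat.cast_choose ℝ (by omega : i ≤ n-m), show n-m-i = (n-m)-i from by omega]
      rw [hc1, hc2, hc3, hc4, hCst]
      have f1 : ((m+i).factorial : ℝ) ≠ 0 := Nat.cast_ne_zero.mpr (Nat.factorial_ne_zero _)
      have f2 : ((n-m-i).factorial : ℝ) ≠ 0 := Nat.cast_ne_zero.mpr (Nat.factorial_ne_zero _)
      have f3 : ((N-m-i).factorial : ℝ) ≠ 0 := Nat.cast_ne_zero.mpr (Nat.factorial_ne_zero _)
      have f4 : ((i.factorial : ℕ) : ℝ) ≠ 0 := Nat.cast_ne_zero.mpr (Nat.factorial_ne_zero _)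
      have f5 : ((N.factorial : ℕ) : ℝ) ≠ 0 := Nat.cast_ne_zero.mpr (Nat.factorial_ne_zero _)
      have f6 : ((n-m).factorial : ℝ) ≠ 0 := Nat.cast_ne_zero.mpr (Nat.factorial_ne_zero _)
      have f7 : ((n.factorial : ℕ) : ℝ) ≠ 0 := Nat.cast_ne_zero.mpr (Nat.factorial_ne_zero _)
      field_simp
      ring_nf
      rw [mul_comm m 2, pow_mul]
      norm_num
    rw [Finset.sum_congr rfl e3, ← Finset.mul_sum]
    have halt : ∑ i ∈ range (n+1-m), (-1:ℝ)^i * (((n-m).choose i : ℕ) : ℝ)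
        = if n-m = 0 then 1 else 0 := by
      rw [show n+1-m = (n-m)+1 from by omega]
      have h := Int.alternating_sum_range_choose (n := n-m)
      have h2 := congrArg (Int.cast : ℤ → ℝ) h
      push_cast at h2
      rw [h2]
    rw [halt]
    rcases eq_or_lt_of_le hnm with rfl | hlt
    · rw [if_pos rfl, Nat.sub_self, if_pos rfl, poch_neg]
      have hNf := congrArg (Nat.cast : ℕ → ℝ) (Nat.choose_mul_factorial_mul_factorial hn)
      push_cast at hNf
      have f5 : ((N.factorial : ℕ) : ℝ) ≠ 0 := Nat.cast_ne_zero.mpr (Nat.factorial_ne_zero _)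
      have f7 : ((m.factorial : ℕ) : ℝ) ≠ 0 := Nat.cast_ne_zero.mpr (Nat.factorial_ne_zero _)
      have f8 : ((N.choose m : ℕ) : ℝ) ≠ 0 := Nat.cast_ne_zero.mpr (Nat.choose_pos hn).ne'
      have f9 : ((-1:ℝ))^m ≠ 0 := pow_ne_zero _ (by norm_num)
      rw [hCst, Nat.sub_self, Nat.factorial_zero]
      rw [div_pow]
      field_simp
      linear_combination ((1-p)^m) * hNf
    · rw [if_neg (by omega), if_neg (by omega)]
      ring
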